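/- If a graph G has a vertex cover of size at most c, then G has neighborhood diversity at most 2^c + c; that is, V(G) can be partitioned into at most 2^c + c classes such that any two vertices in the same class are twins (have the same neighbors outside the pair). -/
import Mathlib


/-- a graph with a vertex cover of size at most `c` has neighborhood
diversity at most `2^c + c`: the vertices can be partitioned into at most `2^c + c`
classes of pairwise twins. -/
theorem stmt16 {V : Type*} [Fintype V] (G : SimpleGraph V) (c : ℕ) (W : Set V)
    (hWcard : W.ncard ≤ c) (hWcov : ∀ u v : V, G.Adj u v → u ∈ W ∨ v ∈ W) :
    ∃ (m : ℕ) (f : V → Fin m), m ≤ 2 ^ c + c ∧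
      ∀ u v : V, f u = f v →
        ∀ w : V, w ≠ u → w ≠ v → (G.Adj u w ↔ G.Adj v w) := by
  classical
  set T := (W → Bool) ⊕ W with hT
  have hcardW : Fintype.card W = W.ncard := (Set.ncard_eq_toFinset_card' W) ▸ by
    simp [Set.toFinset_card]
  let g : V → T := fun v =>
    if h : v ∈ W then Sum.inr ⟨v, h⟩ else Sum.inl (fun w => decide (G.Adj v w))
  let e := Fintype.equivFin T
  refine ⟨Fintype.card T, fun v => e (g v), ?_, ?_⟩
  · have : Fintype.card T = 2 ^ Fintype.card W + Fintype.card W := by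
      simp [hT, Fintype.card_sum]
    rw [this, hcardW]
    exact Nat.add_le_add (Nat.pow_le_pow_right (by norm_num) hWcard) hWcard
  · intro u v huv w hwu hwv
    have hg : g u = g v := e.injective huv
    by_cases hu : u ∈ W <;> by_cases hv : v ∈ W <;> simp only [g, hu, hv, dif_pos,
      dif_neg, not_false_iff] at hg
    · -- both in W: u = v
      have : u = v := congrArg Subtype.val (Sum.inr.inj hg)
      subst this; rfl
    · exact absurd hg (by simp)
    · exact absurd hg (by simp)
    · -- both outside W: same neighborhoods in W
      have hfun := Sum.inl.inj hg
      have key : ∀ x : V, G.Adj u x ↔ G.Adj v x := fun x => by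
        by_cases hx : x ∈ W
        · have := congrFun hfun ⟨x, hx⟩
          simpa using this
        · constructor <;> intro h
          · rcases hWcov u x h with h' | h' <;> [exact absurd h' hu; exact absurd h' hx]
          · rcases hWcov v x h with h' | h' <;> [exact absurd h' hv; exact absurd h' hx]
      exact key w
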